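/- Let M be an MDP in reachability form (all targets absorbing), M' = (S' ∪ {⊥}, Act, s_in, P') a subsystem, F_1,…,F_k ⊆ S target sets. For every scheduler σ of M there exists a scheduler σ' of M' such that Pr_{M'}^{σ'}(◇F_i) ≤ Pr_M^{σ}(◇F_i) for all i and Pr_{M'}^{σ'}(□G_j) ≤ Pr_M^{σ}(□G_j) for all invariance sets G_j ⊆ S. Conversely, for every scheduler σ' of M' there exists a scheduler σ of M with the same inequalities. -/

import Mathlib

open Finset

structure MDP (S A : Type) [Fintype S] [Fintype A] where
  init : S
  trans : S → A → Option (S → ℝ)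
  nonneg' : ∀ s a f, trans s a = some f → ∀ t, 0 ≤ f t
  sum_one' : ∀ s a f, trans s a = some f → ∑ t, f t = 1
  exists_enabled : ∀ s, ∃ a, (trans s a).isSome

namespace MDP

variable {S A : Type} [Fintype S] [Fintype A]

/-- action `a` is enabled in state `s`. -/
def enabled (M : MDP S A) (s : S) (a : A) : Prop := (M.trans s a).isSome

/-- transition probability (0 if the action is not enabled). -/
noncomputable def prob (M : MDP S A) (s : S) (a : A) (t : S) : ℝ :=
  ((M.trans s a).getD 0) t

/-- A (history-dependent, randomized) scheduler. -/
structure Scheduler (M : MDP S A) where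
  choice : List (S × A) → S → A → ℝ
  choice_nonneg : ∀ h s a, 0 ≤ choice h s a
  choice_sum_one : ∀ h s, ∑ a, choice h s a = 1
  choice_support : ∀ h s a, choice h s a ≠ 0 → M.enabled s a

variable [DecidableEq S]

/-- probability of reaching `G` within `n` steps, from history `h` and current state `s`. -/
noncomputable def reachAux (M : MDP S A) (σ : Scheduler M) (G : Finset S) :
    ℕ → List (S × A) → S → ℝ
  | 0, _, s => if s ∈ G then 1 else 0
  | n + 1, h, s =>
      if s ∈ G then 1
      else ∑ a : A, σ.choice h s a * ∑ t : S, M.prob s a t * reachAux M σ G n (h ++ [(s, a)]) t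

/-- probability of eventually reaching `G`, starting in `s`. -/
noncomputable def prReachFrom (M : MDP S A) (σ : Scheduler M) (G : Finset S) (s : S) : ℝ :=
  ⨆ n : ℕ, reachAux M σ G n [] s

/-- probability of eventually reaching `G` from the initial state. -/
noncomputable def prReach (M : MDP S A) (σ : Scheduler M) (G : Finset S) : ℝ :=
  prReachFrom M σ G M.init

/-- probability of staying in `G` for the first `n` steps. -/
noncomputable def invAux (M : MDP S A) (σ : Scheduler M) (G : Finset S) :
    ℕ → List (S × A) → S → ℝ
  | 0, _, s => if s ∈ G then 1 else 0
  | n + 1, h, s =>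
      if s ∈ G then
        ∑ a : A, σ.choice h s a * ∑ t : S, M.prob s a t * invAux M σ G n (h ++ [(s, a)]) t
      else 0

/-- probability of always remaining in `G`, from the initial state. -/
noncomputable def prInv (M : MDP S A) (σ : Scheduler M) (G : Finset S) : ℝ :=
  ⨅ n : ℕ, invAux M σ G n [] M.init

/-- expected total reward collected in the first `n` steps. -/
noncomputable def expTotal (M : MDP S A) (σ : Scheduler M) (r : S → A → ℝ) :
    ℕ → List (S × A) → S → ℝ
  | 0, _, _ => 0
  | n + 1, h, s =>
      ∑ a : A, σ.choice h s a *
        (r s a + ∑ t : S, M.prob s a t * expTotal M σ r n (h ++ [(s, a)]) t)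

/-- expected (liminf) mean payoff under scheduler `σ`. -/
noncomputable def expMPinf (M : MDP S A) (σ : Scheduler M) (r : S → A → ℝ) : ℝ :=
  Filter.liminf (fun n : ℕ => expTotal M σ r n [] M.init / n) Filter.atTop

/-- expected (limsup) mean payoff under scheduler `σ`. -/
noncomputable def expMPsup (M : MDP S A) (σ : Scheduler M) (r : S → A → ℝ) : ℝ :=
  Filter.limsup (fun n : ℕ => expTotal M σ r n [] M.init / n) Filter.atTop

/-- `M'` (with fresh sink `⊥ = none`) is a subsystem of `M` with state set `S' ∪ {⊥}`. -/
def IsSubsystem (M : MDP S A) (S' : Finset S) (M' : MDP (Option S) A) : Prop :=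
  M.init ∈ S' ∧ M'.init = some M.init ∧
  (∀ a, M'.enabled none a → ∀ t, M'.prob none a t = if t = none then 1 else 0) ∧
  (∀ s ∈ S', ∀ a, (M'.enabled (some s) a ↔ M.enabled s a)) ∧
  (∀ s ∈ S', ∀ t ∈ S', ∀ a,
    M'.prob (some s) a (some t) = M.prob s a t ∨ M'.prob (some s) a (some t) = 0) ∧
  (∀ s ∈ S', ∀ t, t ∉ S' → ∀ a, M'.prob (some s) a (some t) = 0)

/-- `M'` is the subsystem of `M` induced by `S'`: transitions leaving `S'` are
redirected to the absorbing sink `⊥ = none`. -/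
def IsInducedSubsystem (M : MDP S A) (S' : Finset S) (M' : MDP (Option S) A) : Prop :=
  M.init ∈ S' ∧ M'.init = some M.init ∧
  (∀ a, M'.enabled none a → ∀ t, M'.prob none a t = if t = none then 1 else 0) ∧
  (∀ s ∈ S', ∀ a, (M'.enabled (some s) a ↔ M.enabled s a)) ∧
  (∀ s ∈ S', ∀ t ∈ S', ∀ a, M'.prob (some s) a (some t) = M.prob s a t) ∧
  (∀ s ∈ S', ∀ t, t ∉ S' → ∀ a, M'.prob (some s) a (some t) = 0) ∧
  (∀ s ∈ S', ∀ a, M.enabled s a → M'.prob (some s) a none = ∑ t ∈ S'ᶜ, M.prob s a t)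

/-- `C` is an end component of `M`. -/
def IsEC (M : MDP S A) (C : Finset (S × A)) : Prop :=
  C.Nonempty ∧ (∀ p ∈ C, M.enabled p.1 p.2) ∧
  (∀ p ∈ C, ∀ t, 0 < M.prob p.1 p.2 t → t ∈ C.image Prod.fst) ∧
  (∀ s ∈ C.image Prod.fst, ∀ t ∈ C.image Prod.fst,
    Relation.ReflTransGen (fun u v => ∃ a, (u, a) ∈ C ∧ 0 < M.prob u a v) s t)

end MDP

/-- positive boolean combinations of lower-bounded reachability and invariance
predicates; the flag `strict` distinguishes `>` from `≥`. -/
inductive MOProp (S : Type) where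
  | reach (G : Finset S) (lam : ℝ) (strict : Bool)
  | invar (G : Finset S) (lam : ℝ) (strict : Bool)
  | conj (p q : MOProp S)
  | disj (p q : MOProp S)

namespace MDP

variable {S A : Type} [Fintype S] [Fintype A] [DecidableEq S]

/-- satisfaction of a multi-objective property in `M` under `σ`. -/
def Sat (M : MDP S A) (σ : Scheduler M) : MOProp S → Prop
  | .reach G lam strict => if strict then lam < prReach M σ G else lam ≤ prReach M σ G
  | .invar G lam strict => if strict then lam < prInv M σ G else lam ≤ prInv M σ G
  | .conj p q => Sat M σ p ∧ Sat M σ q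
  | .disj p q => Sat M σ p ∨ Sat M σ q

/-- satisfaction of a multi-objective property (over the original state space) in a
subsystem `M'` with sink `⊥ = none`. -/
def SatSub (M' : MDP (Option S) A) (σ : Scheduler M') : MOProp S → Prop
  | .reach G lam strict =>
      if strict then lam < prReach M' σ (G.image some) else lam ≤ prReach M' σ (G.image some)
  | .invar G lam strict =>
      if strict then lam < prInv M' σ (G.image some) else lam ≤ prInv M' σ (G.image some)
  | .conj p q => SatSub M' σ p ∧ SatSub M' σ q
  | .disj p q => SatSub M' σ p ∨ SatSub M' σ q

end MDP

section Aux

open MDP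

variable {S A : Type} [Fintype S] [Fintype A] [DecidableEq S]

lemma MDP.prob_nonneg (M : MDP S A) (s : S) (a : A) (t : S) : 0 ≤ M.prob s a t := by
  unfold MDP.prob
  cases h : M.trans s a with
  | none => simp
  | some f => simpa using M.nonneg' s a f h t

lemma MDP.prob_sum_le_one (M : MDP S A) (s : S) (a : A) : ∑ t, M.prob s a t ≤ 1 := by
  unfold MDP.prob
  cases h : M.trans s a with
  | none => simp
  | some f => simp [M.sum_one' s a f h]

lemma MDP.prob_not_enabled (M : MDP S A) {s : S} {a : A} (hna : ¬ M.enabled s a) (t : S) :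
    M.prob s a t = 0 := by
  unfold MDP.prob
  cases h : M.trans s a with
  | none => simp
  | some f => exact absurd (by simp [MDP.enabled, h]) hna

lemma MDP.reachAux_nonneg (M : MDP S A) (σ : Scheduler M) (G : Finset S) :
    ∀ n h s, 0 ≤ reachAux M σ G n h s := by
  intro n
  induction n with
  | zero => intro h s; simp only [reachAux]; positivity
  | succ n ih =>
      intro h s
      simp only [reachAux]
      split
      · norm_num
      · refine Finset.sum_nonneg fun a _ => mul_nonneg (σ.choice_nonneg h s a) ?_
        exact Finset.sum_nonneg fun t _ =>
          mul_nonneg (M.prob_nonneg s a t) (ih _ t)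

lemma MDP.reachAux_le_one (M : MDP S A) (σ : Scheduler M) (G : Finset S) :
    ∀ n h s, reachAux M σ G n h s ≤ 1 := by
  intro n
  induction n with
  | zero => intro h s; simp only [reachAux]; split <;> norm_num
  | succ n ih =>
      intro h s
      simp only [reachAux]
      split
      · exact le_refl 1
      · calc ∑ a : A, σ.choice h s a *
              ∑ t : S, M.prob s a t * reachAux M σ G n (h ++ [(s, a)]) t
            ≤ ∑ a : A, σ.choice h s a * 1 := by
              refine Finset.sum_le_sum fun a _ => ?_
              refine mul_le_mul_of_nonneg_left ?_ (σ.choice_nonneg h s a)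
              calc ∑ t : S, M.prob s a t * reachAux M σ G n (h ++ [(s, a)]) t
                  ≤ ∑ t : S, M.prob s a t * 1 :=
                    Finset.sum_le_sum fun t _ =>
                      mul_le_mul_of_nonneg_left (ih _ t) (M.prob_nonneg s a t)
                _ ≤ 1 := by simpa using M.prob_sum_le_one s a
          _ = 1 := by simp [σ.choice_sum_one h s]

lemma MDP.invAux_nonneg (M : MDP S A) (σ : Scheduler M) (G : Finset S) :
    ∀ n h s, 0 ≤ invAux M σ G n h s := by
  intro n
  induction n with
  | zero => intro h s; simp only [invAux]; positivity
  | succ n ih =>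
      intro h s
      simp only [invAux]
      split
      · refine Finset.sum_nonneg fun a _ => mul_nonneg (σ.choice_nonneg h s a) ?_
        exact Finset.sum_nonneg fun t _ =>
          mul_nonneg (M.prob_nonneg s a t) (ih _ t)
      · norm_num

/-- From the sink `none`, a reachability probability of a `none`-free target is 0. -/
lemma MDP.reachAux_sink (M' : MDP (Option S) A)
    (hsink : ∀ a, M'.enabled none a → ∀ t, M'.prob none a t = if t = none then 1 else 0)
    (σ' : Scheduler M') (T : Finset (Option S)) (hT : none ∉ T) :
    ∀ n h, reachAux M' σ' T n h none = 0 := by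
  intro n
  induction n with
  | zero => intro h; simp [reachAux, hT]
  | succ n ih =>
      intro h
      simp only [reachAux, if_neg hT]
      refine Finset.sum_eq_zero fun a _ => ?_
      by_cases ha : σ'.choice h none a = 0
      · simp [ha]
      · have hen := σ'.choice_support h none a ha
        have : ∑ t : Option S, M'.prob none a t * reachAux M' σ' T n (h ++ [(none, a)]) t
            = 0 := by
          rw [Fintype.sum_option]
          simp [hsink a hen, ih]
        simp [this]

/-- From the sink `none`, an invariance probability of a `none`-free set is 0. -/
lemma MDP.invAux_sink (M' : MDP (Option S) A)
    (σ' : Scheduler M') (T : Finset (Option S)) (hT : none ∉ T) :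
    ∀ n h, invAux M' σ' T n h none = 0 := by
  intro n
  cases n with
  | zero => intro h; simp [invAux, hT]
  | succ n => intro h; simp [invAux, hT]

/-- key comparison lemma for reachability. -/
lemma MDP.reachAux_sub_le (M : MDP S A) (S' : Finset S) (M' : MDP (Option S) A)
    (hsink : ∀ a, M'.enabled none a → ∀ t, M'.prob none a t = if t = none then 1 else 0)
    (hp : ∀ s ∈ S', ∀ t ∈ S', ∀ a,
      M'.prob (some s) a (some t) = M.prob s a t ∨ M'.prob (some s) a (some t) = 0)
    (hout : ∀ s ∈ S', ∀ t, t ∉ S' → ∀ a, M'.prob (some s) a (some t) = 0)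
    (σ : Scheduler M) (σ' : Scheduler M')
    (hcm : ∀ h s a, s ∈ S' →
      σ'.choice (h.map fun p => (some p.1, p.2)) (some s) a = σ.choice h s a)
    (F : Finset S) :
    ∀ n (h : List (S × A)) (s : S), s ∈ S' →
      reachAux M' σ' (F.image some) n (h.map fun p => (some p.1, p.2)) (some s)
        ≤ reachAux M σ F n h s := by
  have hmem : ∀ s : S, (some s ∈ F.image some) ↔ s ∈ F := by
    intro s; simp
  intro n
  induction n with
  | zero =>
      intro h s _
      simp only [reachAux, hmem]
      exact le_rfl
  | succ n ih =>
      intro h s hs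
      simp only [reachAux, hmem]
      split
      · exact le_refl 1
      · refine Finset.sum_le_sum fun a _ => ?_
        rw [hcm h s a hs]
        refine mul_le_mul_of_nonneg_left ?_ (σ.choice_nonneg h s a)
        rw [Fintype.sum_option]
        have hmap : ((h.map fun p => (some p.1, p.2)) ++ [(some s, a)])
            = (h ++ [(s, a)]).map fun p => (some p.1, p.2) := by
          simp
        rw [hmap,
          MDP.reachAux_sink M' hsink σ' (F.image some) (by simp) n _]
        rw [mul_zero, zero_add]
        refine Finset.sum_le_sum fun t _ => ?_
        by_cases ht : t ∈ S'
        · have h1 : M'.prob (some s) a (some t) ≤ M.prob s a t := by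
            rcases hp s hs t ht a with h' | h'
            · rw [h']
            · rw [h']; exact M.prob_nonneg s a t
          exact mul_le_mul h1 (ih _ t ht)
            (MDP.reachAux_nonneg M' σ' _ n _ _) (M.prob_nonneg s a t)
        · rw [hout s hs t ht a, zero_mul]
          exact mul_nonneg (M.prob_nonneg s a t) (MDP.reachAux_nonneg M σ F n _ t)

/-- key comparison lemma for invariance. -/
lemma MDP.invAux_sub_le (M : MDP S A) (S' : Finset S) (M' : MDP (Option S) A)
    (hp : ∀ s ∈ S', ∀ t ∈ S', ∀ a,
      M'.prob (some s) a (some t) = M.prob s a t ∨ M'.prob (some s) a (some t) = 0)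
    (hout : ∀ s ∈ S', ∀ t, t ∉ S' → ∀ a, M'.prob (some s) a (some t) = 0)
    (σ : Scheduler M) (σ' : Scheduler M')
    (hcm : ∀ h s a, s ∈ S' →
      σ'.choice (h.map fun p => (some p.1, p.2)) (some s) a = σ.choice h s a)
    (G : Finset S) :
    ∀ n (h : List (S × A)) (s : S), s ∈ S' →
      invAux M' σ' (G.image some) n (h.map fun p => (some p.1, p.2)) (some s)
        ≤ invAux M σ G n h s := by
  have hmem : ∀ s : S, (some s ∈ G.image some) ↔ s ∈ G := by
    intro s; simp
  intro n
  induction n with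
  | zero =>
      intro h s _
      simp only [invAux, hmem]
      exact le_rfl
  | succ n ih =>
      intro h s hs
      simp only [invAux, hmem]
      split
      · refine Finset.sum_le_sum fun a _ => ?_
        rw [hcm h s a hs]
        refine mul_le_mul_of_nonneg_left ?_ (σ.choice_nonneg h s a)
        rw [Fintype.sum_option]
        have hmap : ((h.map fun p => (some p.1, p.2)) ++ [(some s, a)])
            = (h ++ [(s, a)]).map fun p => (some p.1, p.2) := by
          simp
        rw [hmap, MDP.invAux_sink M' σ' (G.image some) (by simp) n _]
        rw [mul_zero, zero_add]
        refine Finset.sum_le_sum fun t _ => ?_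
        by_cases ht : t ∈ S'
        · have h1 : M'.prob (some s) a (some t) ≤ M.prob s a t := by
            rcases hp s hs t ht a with h' | h'
            · rw [h']
            · rw [h']; exact M.prob_nonneg s a t
          exact mul_le_mul h1 (ih _ t ht)
            (MDP.invAux_nonneg M' σ' _ n _ _) (M.prob_nonneg s a t)
        · rw [hout s hs t ht a, zero_mul]
          exact mul_nonneg (M.prob_nonneg s a t) (MDP.invAux_nonneg M σ G n _ t)
      · exact le_rfl

open Classical in
/-- a default deterministic choice, always taking some enabled action. -/
noncomputable def dfltChoice {S' A' : Type} [Fintype S'] [Fintype A']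
    (N : MDP S' A') (s : S') (a : A') : ℝ :=
  if a = Classical.choose (N.exists_enabled s) then 1 else 0

open Classical in
lemma dfltChoice_nonneg {S' A' : Type} [Fintype S'] [Fintype A']
    (N : MDP S' A') (s : S') (a : A') : 0 ≤ dfltChoice N s a := by
  unfold dfltChoice; split <;> norm_num

open Classical in
lemma dfltChoice_sum_one {S' A' : Type} [Fintype S'] [Fintype A']
    (N : MDP S' A') (s : S') : ∑ a, dfltChoice N s a = 1 := by
  simp [dfltChoice]

open Classical in
lemma dfltChoice_support {S' A' : Type} [Fintype S'] [Fintype A']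
    (N : MDP S' A') (s : S') (a : A') (h : dfltChoice N s a ≠ 0) : N.enabled s a := by
  unfold dfltChoice at h
  split at h
  · subst ‹a = _›; exact Classical.choose_spec (N.exists_enabled s)
  · exact absurd rfl h

/-- transport of the pointwise bounds from `reachAux`/`invAux` to `prReach`/`prInv`. -/
lemma MDP.prReach_prInv_sub_le (M : MDP S A) (S' : Finset S) (M' : MDP (Option S) A)
    (hinit : M.init ∈ S') (hinit' : M'.init = some M.init)
    (hsink : ∀ a, M'.enabled none a → ∀ t, M'.prob none a t = if t = none then 1 else 0)
    (hp : ∀ s ∈ S', ∀ t ∈ S', ∀ a,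
      M'.prob (some s) a (some t) = M.prob s a t ∨ M'.prob (some s) a (some t) = 0)
    (hout : ∀ s ∈ S', ∀ t, t ∉ S' → ∀ a, M'.prob (some s) a (some t) = 0)
    (σ : Scheduler M) (σ' : Scheduler M')
    (hcm : ∀ h s a, s ∈ S' →
      σ'.choice (h.map fun p => (some p.1, p.2)) (some s) a = σ.choice h s a) :
    (∀ F : Finset S, prReach M' σ' (F.image some) ≤ prReach M σ F) ∧
    (∀ G : Finset S, prInv M' σ' (G.image some) ≤ prInv M σ G) := by
  constructor
  · intro F
    unfold MDP.prReach MDP.prReachFrom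
    refine ciSup_le fun n => ?_
    have h1 : reachAux M' σ' (F.image some) n [] M'.init ≤ reachAux M σ F n [] M.init := by
      rw [hinit']
      exact MDP.reachAux_sub_le M S' M' hsink hp hout σ σ' hcm F n [] M.init hinit
    refine le_trans h1 (le_ciSup (f := fun m => MDP.reachAux M σ F m [] M.init) ⟨1, ?_⟩ n)
    rintro x ⟨m, rfl⟩
    exact MDP.reachAux_le_one M σ F m [] M.init
  · intro G
    unfold MDP.prInv
    refine le_ciInf fun n => ?_
    have h1 : invAux M' σ' (G.image some) n [] M'.init ≤ invAux M σ G n [] M.init := by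
      rw [hinit']
      exact MDP.invAux_sub_le M S' M' hp hout σ σ' hcm G n [] M.init hinit
    refine le_trans (ciInf_le (f := fun m => MDP.invAux M' σ' (G.image some) m [] M'.init) ⟨0, ?_⟩ n) h1
    rintro x ⟨m, rfl⟩
    exact MDP.invAux_nonneg M' σ' _ m [] M'.init

end Aux

/-- Scheduler correspondence between an MDP in reachability form and a subsystem:
every scheduler of `M` is mimicked by a scheduler of `M'` with pointwise smaller
reachability and invariance probabilities, and vice versa. -/
theorem subsystem_scheduler_correspondence {S A : Type} [Fintype S] [Fintype A]
    [DecidableEq S] (M : MDP S A) {k l : ℕ}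
    (F : Fin k → Finset S) (G : Fin l → Finset S)
    (habs : ∀ i, ∀ s ∈ F i, ∀ a, M.enabled s a → M.prob s a s = 1)
    (S' : Finset S) (M' : MDP (Option S) A) (hsub : MDP.IsSubsystem M S' M') :
    (∀ σ : MDP.Scheduler M, ∃ σ' : MDP.Scheduler M',
        (∀ i, MDP.prReach M' σ' ((F i).image some) ≤ MDP.prReach M σ (F i)) ∧
        (∀ j, MDP.prInv M' σ' ((G j).image some) ≤ MDP.prInv M σ (G j))) ∧
    (∀ σ' : MDP.Scheduler M', ∃ σ : MDP.Scheduler M,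
        (∀ i, MDP.prReach M' σ' ((F i).image some) ≤ MDP.prReach M σ (F i)) ∧
        (∀ j, MDP.prInv M' σ' ((G j).image some) ≤ MDP.prInv M σ (G j))) := by
  classical
  obtain ⟨hinit, hinit', hsink, hen, hp, hout⟩ := hsub
  constructor
  · intro σ
    refine ⟨⟨fun h' s' a => Option.casesOn s' (dfltChoice M' none a)
        (fun s => if s ∈ S' then
          σ.choice (h'.map fun p => (p.1.getD M.init, p.2)) s a
        else dfltChoice M' (some s) a), ?_, ?_, ?_⟩, ?_⟩
    · rintro h' (_ | s) a
      · exact dfltChoice_nonneg M' none a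
      · dsimp only
        split
        · exact σ.choice_nonneg _ s a
        · exact dfltChoice_nonneg M' (some s) a
    · rintro h' (_ | s)
      · exact dfltChoice_sum_one M' none
      · dsimp only
        split
        · exact σ.choice_sum_one _ s
        · exact dfltChoice_sum_one M' (some s)
    · rintro h' (_ | s) a hne
      · exact dfltChoice_support M' none a hne
      · dsimp only at hne
        split at hne
        · exact (hen s ‹s ∈ S'› a).mpr (σ.choice_support _ s a hne)
        · exact dfltChoice_support M' (some s) a hne
    · set σ' : MDP.Scheduler M' := ⟨_, _, _, _⟩
      have hcm : ∀ (h : List (S × A)) s a, s ∈ S' →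
          σ'.choice (h.map fun p => (some p.1, p.2)) (some s) a = σ.choice h s a := by
        intro h s a hs
        show (if s ∈ S' then _ else _) = _
        rw [if_pos hs]
        congr 1
        rw [List.map_map]
        induction h with
        | nil => rfl
        | cons x xs ihx => simp only [List.map_cons, Function.comp, Option.getD_some, ihx]
      obtain ⟨h1, h2⟩ := MDP.prReach_prInv_sub_le M S' M' hinit hinit' hsink hp hout σ σ' hcm
      exact ⟨fun i => h1 (F i), fun j => h2 (G j)⟩
  · intro σ'
    refine ⟨⟨fun h s a => if s ∈ S' then
        σ'.choice (h.map fun p => (some p.1, p.2)) (some s) a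
      else dfltChoice M s a, ?_, ?_, ?_⟩, ?_⟩
    · intro h s a
      split
      · exact σ'.choice_nonneg _ (some s) a
      · exact dfltChoice_nonneg M s a
    · intro h s
      split
      · exact σ'.choice_sum_one _ (some s)
      · exact dfltChoice_sum_one M s
    · intro h s a hne
      split at hne
      · exact (hen s ‹s ∈ S'› a).mp (σ'.choice_support _ (some s) a hne)
      · exact dfltChoice_support M s a hne
    · set σ : MDP.Scheduler M := ⟨_, _, _, _⟩
      have hcm : ∀ (h : List (S × A)) s a, s ∈ S' →
          σ'.choice (h.map fun p => (some p.1, p.2)) (some s) a = σ.choice h s a := by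
        intro h s a hs
        show _ = (if s ∈ S' then _ else _)
        rw [if_pos hs]
      obtain ⟨h1, h2⟩ := MDP.prReach_prInv_sub_le M S' M' hinit hinit' hsink hp hout σ σ' hcm
      exact ⟨fun i => h1 (F i), fun j => h2 (G j)⟩
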